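/- arXiv:2211.07096 — 2 statements merged into one kernel-verified Lean document; each statement's English description precedes it below -/
import Mathlib

section
/- Fix a point (x,y) ∈ ℝ^{d_x} × ℝ^{d_y} and assume: ‖∇_x f(x,y)‖ ≤ ℓ_{f,0} and ‖∇_y f(x,y)‖ ≤ ℓ_{f,0}; ∇_{yy} g(x,y) is symmetric with μ_g I ⪯ ∇_{yy} g(x,y) (μ_g > 0) and ‖∇_{yy} g(x,y)‖ ≤ ℓ_{g,1}; ‖∇_{xy} g(x,y)‖ ≤ ℓ_{g,1}; and ‖∇h(x)‖ ≤ ℓ_{h,0}. Then ‖∇̄f(x,y)‖ ≤ ℓ_{f,0}(1 + L_y), where L_y := (ℓ_{g,1} + (ℓ_{g,1} + μ_g)‖A⁺‖ ℓ_{h,0})/μ_g. -/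
open Matrix
open scoped Kronecker

noncomputable section

/-- `ℝ^n` with the Euclidean inner product. -/
abbrev Euc (n : ℕ) : Type := EuclideanSpace ℝ (Fin n)

/-- Reinterpret a plain vector as an element of Euclidean space. -/
def toEuc {n : ℕ} (v : Fin n → ℝ) : Euc n := WithLp.toLp 2 v

/-- Spectral (operator) norm of a real matrix. -/
def specNorm {m n : Type*} [Fintype m] [Fintype n] [DecidableEq n]
    (M : Matrix m n ℝ) : ℝ :=
  ‖LinearMap.toContinuousLinearMap (Matrix.toEuclideanLin M)‖

/-- The four Moore–Penrose identities. -/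
def IsMoorePenrose {a b : ℕ} (A : Matrix (Fin a) (Fin b) ℝ)
    (Ap : Matrix (Fin b) (Fin a) ℝ) : Prop :=
  A * Ap * A = A ∧ Ap * A * Ap = Ap ∧ (A * Ap)ᵀ = A * Ap ∧ (Ap * A)ᵀ = Ap * A

/-- Partial gradient in the first variable. -/
def gradx {dx dy : ℕ} (f : Euc dx → Euc dy → ℝ) (x : Euc dx) (y : Euc dy) : Euc dx :=
  gradient (fun x' => f x' y) x

/-- Partial gradient in the second variable. -/
def grady {dx dy : ℕ} (f : Euc dx → Euc dy → ℝ) (x : Euc dx) (y : Euc dy) : Euc dy :=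
  gradient (fun y' => f x y') y

/-- Jacobian matrix of a vector-valued map: entry `(i, j)` is `∂φ_i/∂x_j`. -/
def jacM {n m : ℕ} (φ : Euc n → Euc m) (x : Euc n) : Matrix (Fin m) (Fin n) ℝ :=
  Matrix.of fun i j => fderiv ℝ φ x (EuclideanSpace.single j (1 : ℝ)) i

/-- `∇_{yy} g(x,y)`: entry `(i, j)` is `∂²g/∂y_i∂y_j`. -/
def hessYY {dx dy : ℕ} (g : Euc dx → Euc dy → ℝ) (x : Euc dx) (y : Euc dy) :
    Matrix (Fin dy) (Fin dy) ℝ :=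
  Matrix.of fun i j => gradient (fun y' => grady g x y' j) y i

/-- `∇_{xy} g(x,y)`: entry `(i, j)` is `∂²g/∂x_i∂y_j`. -/
def hessXY {dx dy : ℕ} (g : Euc dx → Euc dy → ℝ) (x : Euc dx) (y : Euc dy) :
    Matrix (Fin dx) (Fin dy) ℝ :=
  Matrix.of fun i j => gradient (fun x' => grady g x' y j) x i

/-- `∇_{yx} g(x,y)`: entry `(i, j)` is `∂²g/∂y_i∂x_j`. -/
def hessYX {dx dy : ℕ} (g : Euc dx → Euc dy → ℝ) (x : Euc dx) (y : Euc dy) :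
    Matrix (Fin dy) (Fin dx) ℝ :=
  Matrix.of fun i j => gradient (fun y' => gradx g x y' j) y i

/-- `∇_{xx} g(x,y)`. -/
def hessXX {dx dy : ℕ} (g : Euc dx → Euc dy → ℝ) (x : Euc dx) (y : Euc dy) :
    Matrix (Fin dx) (Fin dx) ℝ :=
  Matrix.of fun i j => gradient (fun x' => gradx g x' y j) x i

/-- The surrogate upper-level gradient `∇̄f(x,y)`. -/
def nablaBarF {dx dy my k : ℕ} (Ap : Matrix (Fin dy) (Fin my) ℝ)
    (V₂ : Matrix (Fin dy) (Fin k) ℝ) (f g : Euc dx → Euc dy → ℝ)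
    (h : Euc dx → Euc my) (x : Euc dx) (y : Euc dy) : Euc dx :=
  gradx f x y + toEuc
    ((((jacM h x)ᵀ * Apᵀ * hessYY g x y - hessXY g x y) * V₂ *
        (V₂ᵀ * hessYY g x y * V₂)⁻¹ * V₂ᵀ - (jacM h x)ᵀ * Apᵀ).mulVec (grady f x y))


section AuxLemmas

open scoped Matrix.Norms.L2Operator

lemma specNorm_eq {m n : Type*} [Fintype m] [Fintype n] [DecidableEq n]
    (M : Matrix m n ℝ) : specNorm M = ‖M‖ := rfl

lemma norm_transpose' {m n : Type*} [Fintype m] [Fintype n] [DecidableEq m] [DecidableEq n]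
    (M : Matrix m n ℝ) : ‖Mᵀ‖ = ‖M‖ := by
  rw [← conjTranspose_eq_transpose_of_trivial, l2_opNorm_conjTranspose]

lemma norm_one_le' (k : ℕ) : ‖(1 : Matrix (Fin k) (Fin k) ℝ)‖ ≤ 1 := by
  rw [cstar_norm_def, _root_.map_one]
  exact ContinuousLinearMap.norm_id_le

lemma norm_V_le {n k : ℕ} (V : Matrix (Fin n) (Fin k) ℝ) (h : Vᵀ * V = 1) : ‖V‖ ≤ 1 := by
  have h2 : ‖V‖ * ‖V‖ ≤ 1 := by
    rw [← l2_opNorm_conjTranspose_mul_self, conjTranspose_eq_transpose_of_trivial, h]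
    exact norm_one_le' k
  nlinarith [norm_nonneg (E := Matrix (Fin n) (Fin k) ℝ) V]

lemma dot_as_inner {n : ℕ} (u v : Fin n → ℝ) : u ⬝ᵥ v = (inner ℝ (toEuc u) (toEuc v) : ℝ) := by
  simp [toEuc, PiLp.inner_apply, dotProduct, RCLike.inner_apply, mul_comm]

lemma mulVec_norm_ge {n : ℕ} (S : Matrix (Fin n) (Fin n) ℝ) (μ : ℝ)
    (hpsd : (S - μ • 1).PosSemidef) (u : Fin n → ℝ) :
    μ * ‖toEuc u‖ ≤ ‖toEuc (S *ᵥ u)‖ := by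
  have h0 := hpsd.dotProduct_mulVec_nonneg u
  simp only [star_trivial, sub_mulVec, dotProduct_sub, smul_mulVec, one_mulVec,
    dotProduct_smul, smul_eq_mul] at h0
  have h1 : μ * (u ⬝ᵥ u) ≤ u ⬝ᵥ (S *ᵥ u) := by linarith
  rw [dot_as_inner, dot_as_inner] at h1
  have h2 : (inner ℝ (toEuc u) (toEuc (S *ᵥ u)) : ℝ) ≤ ‖toEuc u‖ * ‖toEuc (S *ᵥ u)‖ :=
    real_inner_le_norm _ _
  rw [real_inner_self_eq_norm_sq] at h1
  rcases eq_or_lt_of_le (norm_nonneg (toEuc u)) with h | h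
  · rw [← h, mul_zero]; exact norm_nonneg _
  · nlinarith

lemma posDef_of_shift {n : ℕ} (S : Matrix (Fin n) (Fin n) ℝ) (μ : ℝ) (hμ : 0 < μ)
    (hpsd : (S - μ • 1).PosSemidef) : S.PosDef := by
  refine posDef_iff_dotProduct_mulVec.2 ⟨?_, ?_⟩
  · have h1 := hpsd.1
    have : (S - μ • 1)ᴴ = S - μ • 1 := h1
    rw [conjTranspose_sub, conjTranspose_smul, conjTranspose_one] at this
    have := congrArg (· + μ • (1 : Matrix (Fin n) (Fin n) ℝ)) this
    simpa [sub_add_cancel, IsHermitian] using this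
  · intro x hx
    have h0 := hpsd.dotProduct_mulVec_nonneg x
    simp only [star_trivial, sub_mulVec, dotProduct_sub, smul_mulVec, one_mulVec,
      dotProduct_smul, smul_eq_mul] at h0
    have hxx : 0 < x ⬝ᵥ x := by
      have := Matrix.dotProduct_self_star_pos_iff.mpr hx
      simpa using this
    simp only [star_trivial]
    nlinarith

lemma norm_mulVec_le {m n : ℕ} (M : Matrix (Fin m) (Fin n) ℝ) (v : Euc n) :
    ‖toEuc (M *ᵥ v)‖ ≤ ‖M‖ * ‖v‖ := M.l2_opNorm_mulVec v

lemma inv_norm_le {n : ℕ} (S : Matrix (Fin n) (Fin n) ℝ) (μ : ℝ) (hμ : 0 < μ)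
    (hpsd : (S - μ • 1).PosSemidef) : ‖S⁻¹‖ ≤ 1 / μ := by
  have hpd := posDef_of_shift S μ hμ hpsd
  have hSS : S * S⁻¹ = 1 := mul_nonsing_inv S hpd.det_pos.ne'.isUnit
  rw [l2_opNorm_def]
  apply ContinuousLinearMap.opNorm_le_bound _ (by positivity)
  intro v
  show ‖toEuc (S⁻¹ *ᵥ v)‖ ≤ 1 / μ * ‖v‖
  have key := mulVec_norm_ge S μ hpsd (S⁻¹ *ᵥ v)
  have h2 : S *ᵥ (S⁻¹ *ᵥ v) = v := by rw [mulVec_mulVec, hSS, one_mulVec]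
  rw [h2] at key
  rw [div_mul_eq_mul_div, le_div_iff₀ hμ]
  calc ‖toEuc (S⁻¹ *ᵥ v)‖ * μ = μ * ‖toEuc (S⁻¹ *ᵥ v)‖ := mul_comm _ _
    _ ≤ ‖toEuc (⇑v)‖ := key
    _ = 1 * ‖v‖ := by rw [one_mul]; rfl

end AuxLemmas

set_option maxHeartbeats 1000000

open scoped Matrix.Norms.L2Operator in
/-- boundedness of the surrogate gradient `∇̄f(x,y)`. -/
theorem nablaBarF_bound
    {dx dy my k : ℕ}
    (A : Matrix (Fin my) (Fin dy) ℝ) (Ap : Matrix (Fin dy) (Fin my) ℝ)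
    (hMP : IsMoorePenrose A Ap)
    (V₂ : Matrix (Fin dy) (Fin k) ℝ)
    (hV₂orth : V₂ᵀ * V₂ = 1)
    (hV₂ker : LinearMap.range V₂.mulVecLin = LinearMap.ker A.mulVecLin)
    (f g : Euc dx → Euc dy → ℝ) (h : Euc dx → Euc my)
    (x : Euc dx) (y : Euc dy)
    (ℓf0 μg ℓg1 ℓh0 : ℝ)
    (hfx : ‖gradx f x y‖ ≤ ℓf0) (hfy : ‖grady f x y‖ ≤ ℓf0)
    (hsymm : (hessYY g x y).IsSymm)
    (hpsd : (hessYY g x y - μg • (1 : Matrix (Fin dy) (Fin dy) ℝ)).PosSemidef)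
    (hμ : 0 < μg)
    (hHn : specNorm (hessYY g x y) ≤ ℓg1)
    (hxy : specNorm (hessXY g x y) ≤ ℓg1)
    (hjh : specNorm (jacM h x) ≤ ℓh0) :
    ‖nablaBarF Ap V₂ f g h x y‖
      ≤ ℓf0 * (1 + (ℓg1 + (ℓg1 + μg) * specNorm Ap * ℓh0) / μg) := by
  rw [specNorm_eq] at hHn hxy hjh ⊢
  set H := hessYY g x y with hHdef
  set G := hessXY g x y with hGdef
  set J := jacM h x with hJdef
  set S := V₂ᵀ * H * V₂ with hSdef
  have hf0 : 0 ≤ ℓf0 := le_trans (norm_nonneg _) hfx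
  have hg0 : 0 ≤ ℓg1 := le_trans (norm_nonneg _) hHn
  have hh0 : 0 ≤ ℓh0 := le_trans (norm_nonneg _) hjh
  have hAp0 : 0 ≤ ‖Ap‖ := norm_nonneg _
  have hV : ‖V₂‖ ≤ 1 := norm_V_le V₂ hV₂orth
  have hVT : ‖V₂ᵀ‖ ≤ 1 := by rw [norm_transpose']; exact hV
  have hV0 : 0 ≤ ‖V₂‖ := norm_nonneg _
  have hVT0 : 0 ≤ ‖V₂ᵀ‖ := norm_nonneg _
  have hSpsd : (S - μg • 1).PosSemidef := by
    have h1 : (S - μg • (1 : Matrix (Fin k) (Fin k) ℝ)) = V₂ᵀ * (H - μg • 1) * V₂ := by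
      rw [Matrix.mul_sub, Matrix.sub_mul, hSdef]
      congr 1
      rw [Matrix.mul_smul, Matrix.smul_mul, Matrix.mul_one, hV₂orth]
    rw [h1, ← conjTranspose_eq_transpose_of_trivial]
    exact hpsd.conjTranspose_mul_mul_same V₂
  have hSinv : ‖S⁻¹‖ ≤ 1 / μg := inv_norm_le S μg hμ hSpsd
  have hSinv0 : 0 ≤ ‖S⁻¹‖ := norm_nonneg _
  have h1 : ‖Jᵀ * Apᵀ‖ ≤ ℓh0 * ‖Ap‖ := by
    calc ‖Jᵀ * Apᵀ‖ ≤ ‖Jᵀ‖ * ‖Apᵀ‖ := l2_opNorm_mul _ _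
      _ = ‖J‖ * ‖Ap‖ := by rw [norm_transpose', norm_transpose']
      _ ≤ ℓh0 * ‖Ap‖ := mul_le_mul_of_nonneg_right hjh hAp0
  have h10 : 0 ≤ ‖Jᵀ * Apᵀ‖ := norm_nonneg _
  have h2 : ‖Jᵀ * Apᵀ * H - G‖ ≤ ℓh0 * ‖Ap‖ * ℓg1 + ℓg1 := by
    calc ‖Jᵀ * Apᵀ * H - G‖ ≤ ‖Jᵀ * Apᵀ * H‖ + ‖G‖ := norm_sub_le _ _
      _ ≤ ‖Jᵀ * Apᵀ‖ * ‖H‖ + ‖G‖ := add_le_add (l2_opNorm_mul _ _) le_rfl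
      _ ≤ ℓh0 * ‖Ap‖ * ℓg1 + ℓg1 := by
          have := mul_le_mul h1 hHn (norm_nonneg _) (by positivity)
          exact add_le_add this hxy
  have h20 : 0 ≤ ‖Jᵀ * Apᵀ * H - G‖ := norm_nonneg _
  have h3 : ‖(Jᵀ * Apᵀ * H - G) * V₂ * S⁻¹ * V₂ᵀ‖ ≤ (ℓh0 * ‖Ap‖ * ℓg1 + ℓg1) * (1 / μg) := by
    calc ‖(Jᵀ * Apᵀ * H - G) * V₂ * S⁻¹ * V₂ᵀ‖
        ≤ ‖(Jᵀ * Apᵀ * H - G) * V₂ * S⁻¹‖ * ‖V₂ᵀ‖ := l2_opNorm_mul _ _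
      _ ≤ ‖(Jᵀ * Apᵀ * H - G) * V₂‖ * ‖S⁻¹‖ * ‖V₂ᵀ‖ :=
          mul_le_mul_of_nonneg_right (l2_opNorm_mul _ _) hVT0
      _ ≤ ‖Jᵀ * Apᵀ * H - G‖ * ‖V₂‖ * ‖S⁻¹‖ * ‖V₂ᵀ‖ := by
          have := mul_le_mul_of_nonneg_right (l2_opNorm_mul (Jᵀ * Apᵀ * H - G) V₂) hSinv0
          exact mul_le_mul_of_nonneg_right this hVT0
      _ ≤ (ℓh0 * ‖Ap‖ * ℓg1 + ℓg1) * (1 / μg) := by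
          have hb : ‖Jᵀ * Apᵀ * H - G‖ * ‖V₂‖ ≤ (ℓh0 * ‖Ap‖ * ℓg1 + ℓg1) := by
            nlinarith
          have hc : ‖Jᵀ * Apᵀ * H - G‖ * ‖V₂‖ * ‖S⁻¹‖ ≤ (ℓh0 * ‖Ap‖ * ℓg1 + ℓg1) * (1 / μg) := by
            apply mul_le_mul hb hSinv hSinv0 (by positivity)
          nlinarith [mul_nonneg (mul_nonneg h20 hV0) hSinv0]
  have hBnd : ‖(Jᵀ * Apᵀ * H - G) * V₂ * S⁻¹ * V₂ᵀ - Jᵀ * Apᵀ‖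
      ≤ (ℓh0 * ‖Ap‖ * ℓg1 + ℓg1) * (1 / μg) + ℓh0 * ‖Ap‖ :=
    le_trans (norm_sub_le _ _) (add_le_add h3 h1)
  have hmv : ‖toEuc (((Jᵀ * Apᵀ * H - G) * V₂ * S⁻¹ * V₂ᵀ - Jᵀ * Apᵀ) *ᵥ grady f x y)‖
      ≤ ‖(Jᵀ * Apᵀ * H - G) * V₂ * S⁻¹ * V₂ᵀ - Jᵀ * Apᵀ‖ * ‖grady f x y‖ :=
    norm_mulVec_le _ (grady f x y)
  have hmain : ‖nablaBarF Ap V₂ f g h x y‖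
      ≤ ℓf0 + ((ℓh0 * ‖Ap‖ * ℓg1 + ℓg1) * (1 / μg) + ℓh0 * ‖Ap‖) * ℓf0 := by
    calc ‖nablaBarF Ap V₂ f g h x y‖
        ≤ ‖gradx f x y‖ +
          ‖toEuc (((Jᵀ * Apᵀ * H - G) * V₂ * S⁻¹ * V₂ᵀ - Jᵀ * Apᵀ) *ᵥ grady f x y)‖ :=
          norm_add_le _ _
      _ ≤ ℓf0 + ((ℓh0 * ‖Ap‖ * ℓg1 + ℓg1) * (1 / μg) + ℓh0 * ‖Ap‖) * ℓf0 := by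
          refine add_le_add hfx (le_trans hmv ?_)
          exact mul_le_mul hBnd hfy (norm_nonneg _) (by positivity)
  have hident : (ℓh0 * ‖Ap‖ * ℓg1 + ℓg1) * (1 / μg) + ℓh0 * ‖Ap‖
      = (ℓg1 + (ℓg1 + μg) * ‖Ap‖ * ℓh0) / μg := by
    field_simp; ring
  rw [hident] at hmain
  calc ‖nablaBarF Ap V₂ f g h x y‖
      ≤ ℓf0 + (ℓg1 + (ℓg1 + μg) * ‖Ap‖ * ℓh0) / μg * ℓf0 := hmain
    _ = ℓf0 * (1 + (ℓg1 + (ℓg1 + μg) * ‖Ap‖ * ℓh0) / μg) := by ring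
end
end

section
/- Let f : ℝ^{d_x} × ℝ^{d_y} → ℝ be differentiable with ∇f ℓ_{f,1}-Lipschitz and with ‖∇_y f(x,y)‖ ≤ ℓ_{f,0} for all (x,y), and let y* : ℝ^{d_x} → ℝ^{d_y} be differentiable such that the Jacobian ∇y*(x) satisfies ‖∇y*(x)‖ ≤ L_y (spectral norm) for all x and the map x ↦ ∇y*(x) is L_{yx}-Lipschitz in spectral norm. Then the function F(x) := f(x, y*(x)) is differentiable with ∇F(x) = ∇_x f(x, y*(x)) + ∇y*(x)ᵀ ∇_y f(x, y*(x)), and ∇F is L_F-Lipschitz, where L_F := ℓ_{f,1}(1 + L_y)² + ℓ_{f,0} L_{yx}. -/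
open Matrix
open scoped Kronecker

noncomputable section

section Aux

lemma toEuc_eq {n : ℕ} (v : Fin n → ℝ) : toEuc v = v := rfl

open scoped Matrix.Norms.L2Operator in
lemma specNorm_eq_l2 {m n : ℕ} (M : Matrix (Fin m) (Fin n) ℝ) : specNorm M = ‖M‖ := rfl

lemma specNorm_nonneg {m n : ℕ} (M : Matrix (Fin m) (Fin n) ℝ) : 0 ≤ specNorm M := by
  unfold specNorm; exact norm_nonneg _

open scoped Matrix.Norms.L2Operator in
lemma specNorm_transpose {m n : ℕ} (M : Matrix (Fin m) (Fin n) ℝ) :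
    specNorm Mᵀ = specNorm M := by
  rw [specNorm_eq_l2, specNorm_eq_l2, ← Matrix.l2_opNorm_conjTranspose (𝕜 := ℝ) M]
  congr 1

lemma toEuc_mulVec_eq {m n : ℕ} (M : Matrix (Fin m) (Fin n) ℝ) (v : Euc n) :
    toEuc (M.mulVec v) = LinearMap.toContinuousLinearMap (Matrix.toEuclideanLin M) v := rfl

lemma norm_toEuc_mulVec_le {m n : ℕ} (M : Matrix (Fin m) (Fin n) ℝ) (v : Euc n) :
    ‖toEuc (M.mulVec v)‖ ≤ specNorm M * ‖v‖ := by
  rw [toEuc_mulVec_eq]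
  exact ContinuousLinearMap.le_opNorm _ v

lemma fderiv_eq_jacCLM {n m : ℕ} (φ : Euc n → Euc m) (x : Euc n) :
    fderiv ℝ φ x = LinearMap.toContinuousLinearMap (Matrix.toEuclideanLin (jacM φ x)) := by
  apply ContinuousLinearMap.coe_injective
  apply Module.Basis.ext (EuclideanSpace.basisFun (Fin n) ℝ).toBasis
  intro j
  have hb : (EuclideanSpace.basisFun (Fin n) ℝ).toBasis j = EuclideanSpace.single j 1 := by
    simp [EuclideanSpace.basisFun]
    rfl
  rw [hb]
  ext i
  have h1 : (Matrix.toEuclideanLin (jacM φ x)) (EuclideanSpace.single j 1) i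
      = (jacM φ x).mulVec (EuclideanSpace.single j 1) i := rfl
  simp only [ContinuousLinearMap.coe_coe, LinearMap.coe_toContinuousLinearMap', h1,
    Matrix.mulVec, dotProduct]
  rw [Finset.sum_eq_single j]
  · simp [jacM, EuclideanSpace.single_apply]
  · intro k _ hk; simp [EuclideanSpace.single_apply, hk]
  · simp

lemma norm_fderiv_eq_specNorm {n m : ℕ} (φ : Euc n → Euc m) (x : Euc n) :
    ‖fderiv ℝ φ x‖ = specNorm (jacM φ x) := by
  rw [fderiv_eq_jacCLM]; rfl

lemma grad_comp {dx dy : ℕ} (f : Euc dx → Euc dy → ℝ)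
    (hf : Differentiable ℝ (Function.uncurry f))
    (ystar : Euc dx → Euc dy) (hys : Differentiable ℝ ystar) (x : Euc dx) :
    HasGradientAt (fun x' => f x' (ystar x'))
      (gradx f x (ystar x) + toEuc ((jacM ystar x)ᵀ.mulVec (grady f x (ystar x)))) x := by
  set y := ystar x with hy
  set D := fderiv ℝ (Function.uncurry f) (x, y) with hD
  have h1 : HasFDerivAt (Function.uncurry f) D (x, y) := (hf (x, y)).hasFDerivAt
  have h2 : HasFDerivAt (fun x' => (x', ystar x'))
      ((ContinuousLinearMap.id ℝ (Euc dx)).prod (fderiv ℝ ystar x)) x :=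
    HasFDerivAt.prodMk (hasFDerivAt_id x) (hys x).hasFDerivAt
  have hF : HasFDerivAt (fun x' => f x' (ystar x'))
      (D.comp ((ContinuousLinearMap.id ℝ (Euc dx)).prod (fderiv ℝ ystar x))) x := by
    have := h1.comp x h2; exact this
  have hx : HasFDerivAt (fun x' => f x' y)
      (D.comp ((ContinuousLinearMap.id ℝ (Euc dx)).prod 0)) x :=
    by have := h1.comp x (HasFDerivAt.prodMk (hasFDerivAt_id (𝕜 := ℝ) x) (hasFDerivAt_const y x)); exact this
  have hyd : HasFDerivAt (fun y' => f x y')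
      (D.comp ((0 : Euc dy →L[ℝ] Euc dx).prod (ContinuousLinearMap.id ℝ (Euc dy)))) y :=
    by have := h1.comp y (HasFDerivAt.prodMk (hasFDerivAt_const x y) (hasFDerivAt_id y)); exact this
  have hgx : ∀ v : Euc dx, inner ℝ (gradx f x y) v = D (v, 0) := by
    intro v
    have := (hx.hasGradientAt).gradient
    rw [gradx, this]
    simp [real_inner_comm]
  have hgy : ∀ w : Euc dy, inner ℝ (grady f x y) w = D (0, w) := by
    intro w
    have := (hyd.hasGradientAt).gradient
    rw [grady, this]
    simp [real_inner_comm]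
  set G := gradx f x y + toEuc ((jacM ystar x)ᵀ.mulVec (grady f x y)) with hG
  have key : (InnerProductSpace.toDual ℝ (Euc dx)) G
      = D.comp ((ContinuousLinearMap.id ℝ (Euc dx)).prod (fderiv ℝ ystar x)) := by
    ext v
    have hsplit : ((v, fderiv ℝ ystar x v) : Euc dx × Euc dy)
        = (v, 0) + (0, fderiv ℝ ystar x v) := by simp
    have hDv : D.comp ((ContinuousLinearMap.id ℝ (Euc dx)).prod (fderiv ℝ ystar x)) v
        = D (v, 0) + D (0, fderiv ℝ ystar x v) := by
      simp only [ContinuousLinearMap.comp_apply, ContinuousLinearMap.prod_apply,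
        ContinuousLinearMap.id_apply]
      rw [hsplit, map_add]
    have hJ : inner ℝ (toEuc ((jacM ystar x)ᵀ.mulVec (grady f x y))) v
        = (inner ℝ (grady f x y) (fderiv ℝ ystar x v) : ℝ) := by
      have hfd : fderiv ℝ ystar x v = toEuc ((jacM ystar x).mulVec v) := by
        rw [fderiv_eq_jacCLM]; rfl
      rw [hfd]
      simp only [EuclideanSpace.inner_eq_star_dotProduct, toEuc, star_trivial]
      rw [Matrix.dotProduct_mulVec, Matrix.vecMul_transpose]
    rw [InnerProductSpace.toDual_apply_apply, hDv, hG, inner_add_left, hgx v, hJ, hgy _]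
  have hfin := hF.hasGradientAt
  rwa [show (InnerProductSpace.toDual ℝ (Euc dx)).symm
      (D.comp ((ContinuousLinearMap.id ℝ (Euc dx)).prod (fderiv ℝ ystar x))) = G by
    rw [← key]; simp] at hfin

end Aux

/-- smoothness of the overall objective `F(x) = f(x, y*(x))`. -/
theorem F_differentiable_and_smooth
    {dx dy : ℕ} (f : Euc dx → Euc dy → ℝ)
    (hf : Differentiable ℝ (Function.uncurry f))
    (ℓf0 ℓf1 Ly Lyx : ℝ)
    (hf_lip : ∀ (x₁ : Euc dx) (y₁ : Euc dy) (x₂ : Euc dx) (y₂ : Euc dy),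
      Real.sqrt (‖gradx f x₁ y₁ - gradx f x₂ y₂‖ ^ 2 + ‖grady f x₁ y₁ - grady f x₂ y₂‖ ^ 2)
        ≤ ℓf1 * Real.sqrt (‖x₁ - x₂‖ ^ 2 + ‖y₁ - y₂‖ ^ 2))
    (hf0 : ∀ (x : Euc dx) (y : Euc dy), ‖grady f x y‖ ≤ ℓf0)
    (ystar : Euc dx → Euc dy) (hys : Differentiable ℝ ystar)
    (hjac_bound : ∀ x : Euc dx, specNorm (jacM ystar x) ≤ Ly)
    (hjac_lip : ∀ x₁ x₂ : Euc dx,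
      specNorm (jacM ystar x₁ - jacM ystar x₂) ≤ Lyx * ‖x₁ - x₂‖) :
    Differentiable ℝ (fun x => f x (ystar x)) ∧
    (∀ x : Euc dx, gradient (fun x' => f x' (ystar x')) x =
      gradx f x (ystar x) + toEuc ((jacM ystar x)ᵀ.mulVec (grady f x (ystar x)))) ∧
    (∀ x₁ x₂ : Euc dx,
      ‖gradient (fun x' => f x' (ystar x')) x₁ - gradient (fun x' => f x' (ystar x')) x₂‖
        ≤ (ℓf1 * (1 + Ly) ^ 2 + ℓf0 * Lyx) * ‖x₁ - x₂‖) := by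
  have hgradF : ∀ x : Euc dx, gradient (fun x' => f x' (ystar x')) x =
      gradx f x (ystar x) + toEuc ((jacM ystar x)ᵀ.mulVec (grady f x (ystar x))) :=
    fun x => (grad_comp f hf ystar hys x).gradient
  refine ⟨fun x => ((grad_comp f hf ystar hys x).hasFDerivAt).differentiableAt, hgradF, ?_⟩
  intro x₁ x₂
  rcases eq_or_ne x₁ x₂ with h | h
  · subst h; simp
  have hd : (0:ℝ) < ‖x₁ - x₂‖ := by
    rw [norm_pos_iff]; exact sub_ne_zero_of_ne h
  set d := ‖x₁ - x₂‖ with hdd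
  -- nonnegativity of constants
  have hLy : 0 ≤ Ly := (specNorm_nonneg _).trans (hjac_bound x₁)
  have hℓf0 : 0 ≤ ℓf0 := (norm_nonneg _).trans (hf0 x₁ (ystar x₁))
  have hℓf1 : 0 ≤ ℓf1 := by
    have h1 := hf_lip x₁ (ystar x₁) x₂ (ystar x₁)
    rw [sub_self, norm_zero] at h1
    have h2 : (0:ℝ) ≤ ℓf1 * Real.sqrt (d ^ 2 + 0 ^ 2) :=
      le_trans (Real.sqrt_nonneg _) h1
    rw [show (0:ℝ) ^ 2 = 0 by ring, add_zero, Real.sqrt_sq hd.le] at h2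
    nlinarith
  have hLyx : 0 ≤ Lyx := by
    have h1 := (specNorm_nonneg _).trans (hjac_lip x₁ x₂)
    nlinarith
  -- Lipschitz bound on ystar
  have hyy : ‖ystar x₁ - ystar x₂‖ ≤ Ly * d := by
    have := Convex.norm_image_sub_le_of_norm_fderiv_le
      (f := ystar) (C := Ly) (s := Set.univ)
      (fun x _ => (hys x)) (fun x _ => by
        rw [norm_fderiv_eq_specNorm]; exact hjac_bound x)
      convex_univ (Set.mem_univ x₂) (Set.mem_univ x₁)
    exact this
  have hsq : Real.sqrt (‖x₁ - x₂‖ ^ 2 + ‖ystar x₁ - ystar x₂‖ ^ 2) ≤ (1 + Ly) * d := by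
    have hb : (0:ℝ) ≤ ‖ystar x₁ - ystar x₂‖ := norm_nonneg _
    have : ‖x₁ - x₂‖ ^ 2 + ‖ystar x₁ - ystar x₂‖ ^ 2 ≤ ((1 + Ly) * d) ^ 2 := by
      nlinarith
    calc Real.sqrt (‖x₁ - x₂‖ ^ 2 + ‖ystar x₁ - ystar x₂‖ ^ 2)
        ≤ Real.sqrt (((1 + Ly) * d) ^ 2) := Real.sqrt_le_sqrt this
      _ = (1 + Ly) * d := Real.sqrt_sq (by positivity)
  have hlip := (hf_lip x₁ (ystar x₁) x₂ (ystar x₂)).trans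
    (mul_le_mul_of_nonneg_left hsq hℓf1)
  set g₁ := grady f x₁ (ystar x₁) with hg₁
  set g₂ := grady f x₂ (ystar x₂) with hg₂
  set a₁ := gradx f x₁ (ystar x₁) with ha₁
  set a₂ := gradx f x₂ (ystar x₂) with ha₂
  have hgx_le : ‖a₁ - a₂‖ ≤ ℓf1 * ((1 + Ly) * d) := by
    have h' : Real.sqrt (‖a₁ - a₂‖ ^ 2) ≤ Real.sqrt (‖a₁ - a₂‖ ^ 2 + ‖g₁ - g₂‖ ^ 2) :=
      Real.sqrt_le_sqrt (le_add_of_nonneg_right (sq_nonneg _))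
    rw [Real.sqrt_sq (norm_nonneg _)] at h'
    exact h'.trans hlip
  have hgy_le : ‖g₁ - g₂‖ ≤ ℓf1 * ((1 + Ly) * d) := by
    have h' : Real.sqrt (‖g₁ - g₂‖ ^ 2) ≤ Real.sqrt (‖a₁ - a₂‖ ^ 2 + ‖g₁ - g₂‖ ^ 2) :=
      Real.sqrt_le_sqrt (le_add_of_nonneg_left (sq_nonneg _))
    rw [Real.sqrt_sq (norm_nonneg _)] at h'
    exact h'.trans hlip
  set J₁ := jacM ystar x₁ with hJ₁
  set J₂ := jacM ystar x₂ with hJ₂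
  have hdecomp : gradient (fun x' => f x' (ystar x')) x₁ -
      gradient (fun x' => f x' (ystar x')) x₂ =
      (a₁ - a₂) + toEuc (J₁ᵀ.mulVec (g₁ - g₂)) + toEuc ((J₁ - J₂)ᵀ.mulVec g₂) := by
    rw [hgradF x₁, hgradF x₂]
    have hmv : J₁ᵀ.mulVec g₁ - J₂ᵀ.mulVec g₂
        = J₁ᵀ.mulVec (g₁ - g₂) + ((J₁ - J₂)ᵀ).mulVec g₂ := by
      rw [Matrix.transpose_sub, Matrix.sub_mulVec, Matrix.mulVec_sub]
      abel
    have htE : toEuc (J₁ᵀ.mulVec g₁) - toEuc (J₂ᵀ.mulVec g₂)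
        = toEuc (J₁ᵀ.mulVec (g₁ - g₂)) + toEuc ((J₁ - J₂)ᵀ.mulVec g₂) := by
      show toEuc (J₁ᵀ.mulVec g₁ - J₂ᵀ.mulVec g₂) = _
      rw [hmv]; rfl
    calc (a₁ + toEuc (J₁ᵀ.mulVec g₁)) - (a₂ + toEuc (J₂ᵀ.mulVec g₂))
        = (a₁ - a₂) + (toEuc (J₁ᵀ.mulVec g₁) - toEuc (J₂ᵀ.mulVec g₂)) := by abel
      _ = _ := by rw [htE]; abel
  rw [hdecomp]
  have hB : ‖toEuc (J₁ᵀ.mulVec (g₁ - g₂))‖ ≤ Ly * (ℓf1 * ((1 + Ly) * d)) := by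
    refine le_trans (norm_toEuc_mulVec_le _ _) ?_
    rw [specNorm_transpose]
    exact mul_le_mul (hjac_bound x₁) hgy_le (norm_nonneg _) hLy
  have hC : ‖toEuc ((J₁ - J₂)ᵀ.mulVec g₂)‖ ≤ (Lyx * d) * ℓf0 := by
    refine le_trans (norm_toEuc_mulVec_le _ _) ?_
    rw [specNorm_transpose]
    exact mul_le_mul (hjac_lip x₁ x₂) (hf0 x₂ (ystar x₂)) (norm_nonneg _)
      (by positivity)
  have htri := norm_add₃_le (a := a₁ - a₂) (b := toEuc (J₁ᵀ.mulVec (g₁ - g₂)))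
    (c := toEuc ((J₁ - J₂)ᵀ.mulVec g₂))
  have hring : ℓf1 * ((1 + Ly) * d) + Ly * (ℓf1 * ((1 + Ly) * d)) + (Lyx * d) * ℓf0
      = (ℓf1 * (1 + Ly) ^ 2 + ℓf0 * Lyx) * d := by ring
  linarith
end
end
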